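/- Let G be a finite group, N a normal subgroup of G, and U a subgroup of N with [N : U] = 2. Then the restriction to N of the character induced from the trivial character of U satisfies Res^G_N Ind^G_U 1_U = [G : N]·1_N + Σ_{Ng ∈ N\G} χ_{gUg⁻¹}, where χ_{gUg⁻¹} is the unique linear character of N with values in {±1} and kernel gUg⁻¹, and the sum runs over a set of representatives of the cosets N\G. -/
import Mathlib


lemma conj_mem_iff_of_index_two {H : Type*} [Group H] {U : Subgroup H}
    (hidx : U.index = 2) (m u : H) : m⁻¹ * u * m ∈ U ↔ u ∈ U := by
  rw [Subgroup.mul_mem_iff_of_index_two hidx, Subgroup.mul_mem_iff_of_index_two hidx,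
    inv_mem_iff]
  tauto


/-- Let `G` be a finite group, `N ⊴ G`, and `U ≤ N` with `[N : U] = 2`.
Then the restriction to `N` of the character of `G` induced from the trivial character of
`U` (the permutation character of `G` on `G/U`) satisfies
`Res^G_N Ind^G_U 1_U = [G : N]·1_N + ∑_{Ng} χ_{gUg⁻¹}`,
where for each coset (with chosen representative `rep q`) `χ_{gUg⁻¹}` is the unique
`{±1}`-valued character of `N` whose kernel is exactly `gUg⁻¹`. -/
theorem stmt1 (G : Type*) [Group G] [Fintype G] (N U : Subgroup G) [N.Normal]
    (hUN : U ≤ N) (hidx : (U.subgroupOf N).index = 2)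
    [Fintype (G ⧸ N)]
    (rep : G ⧸ N → G) (hrep : ∀ q : G ⧸ N, (QuotientGroup.mk (rep q) : G ⧸ N) = q)
    (χ : G ⧸ N → (↥N →* ℤˣ))
    (hχ : ∀ q : G ⧸ N,
      Subgroup.map N.subtype (χ q).ker
        = Subgroup.map (MulAut.conj (rep q)).toMonoidHom U) :
    ∀ (n : G) (hn : n ∈ N),
      (Nat.card {x : G ⧸ U // n • x = x} : ℤ)
        = (N.index : ℤ) + ∑ q : G ⧸ N, ((χ q ⟨n, hn⟩ : ℤˣ) : ℤ) := by
  intro n hn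
  classical
  -- projection G⧸U → G⧸N
  let π : G ⧸ U → G ⧸ N := fun x => Quotient.liftOn' x QuotientGroup.mk
    (fun a b h => QuotientGroup.eq.mpr (hUN (QuotientGroup.leftRel_apply.mp h)))
  have hπ : ∀ g : G, π (QuotientGroup.mk g) = QuotientGroup.mk g := fun g => rfl
  -- kernel characterization
  have hker : ∀ q : G ⧸ N, ((χ q) ⟨n, hn⟩ = 1 ↔ (rep q)⁻¹ * n * rep q ∈ U) := by
    intro q
    rw [← MonoidHom.mem_ker]
    constructor
    · intro h
      have : n ∈ Subgroup.map N.subtype (χ q).ker := ⟨⟨n, hn⟩, h, rfl⟩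
      rw [hχ q] at this
      obtain ⟨u, hu, hu2⟩ := this
      simp only [MulEquiv.toMonoidHom_eq_coe, MonoidHom.coe_coe, MulAut.conj_apply] at hu2
      have : (rep q)⁻¹ * n * rep q = u := by rw [← hu2]; group
      rwa [this]
    · intro h
      have : n ∈ Subgroup.map (MulAut.conj (rep q)).toMonoidHom U := by
        refine ⟨(rep q)⁻¹ * n * rep q, h, ?_⟩
        simp only [MulEquiv.toMonoidHom_eq_coe, MonoidHom.coe_coe, MulAut.conj_apply]
        group
      rw [← hχ q] at this
      obtain ⟨⟨m, hm⟩, hmk, hm2⟩ := this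
      have : m = n := hm2
      subst this
      exact hmk
  -- conjugation by elements of N preserves U (since U has index 2 in N)
  have hconj : ∀ (m u : G), m ∈ N → u ∈ N → (m⁻¹ * u * m ∈ U ↔ u ∈ U) := by
    intro m u hm hu
    have := conj_mem_iff_of_index_two hidx ⟨m, hm⟩ ⟨u, hu⟩
    simpa [Subgroup.mem_subgroupOf] using this
  -- fixedness characterization
  have hfix : ∀ g : G,
      (n • (QuotientGroup.mk g : G ⧸ U) = QuotientGroup.mk g) ↔ g⁻¹ * n * g ∈ U := by
    intro g
    rw [MulAction.Quotient.smul_mk, QuotientGroup.eq]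
    constructor
    · intro h
      have : ((n * g)⁻¹ * g)⁻¹ ∈ U := inv_mem h
      simpa [mul_assoc] using this
    · intro h
      have : (g⁻¹ * n * g)⁻¹ ∈ U := inv_mem h
      simpa [mul_assoc] using this
  -- per-fiber count
  have key : ∀ q : G ⧸ N,
      (Nat.card {x : G ⧸ U // n • x = x ∧ π x = q} : ℤ)
        = 1 + ((χ q ⟨n, hn⟩ : ℤˣ) : ℤ) := by
    intro q
    rcases Int.units_eq_one_or (χ q ⟨n, hn⟩) with h1 | h1
    · -- fiber has 2 elements
      have hn' : (rep q)⁻¹ * n * rep q ∈ U := (hker q).mp h1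
      have hn'N : (rep q)⁻¹ * n * rep q ∈ N := by
        have := Subgroup.Normal.conj_mem ‹N.Normal› n hn (rep q)⁻¹
        simpa [mul_assoc] using this
      -- bijection from N ⧸ U.subgroupOf N
      let f : N ⧸ U.subgroupOf N → {x : G ⧸ U // n • x = x ∧ π x = q} := fun c =>
        Quotient.liftOn' c
          (fun m : N => (⟨QuotientGroup.mk (rep q * (m : G)), by
            constructor
            · rw [hfix]
              have : ((m : G))⁻¹ * ((rep q)⁻¹ * n * rep q) * (m : G) ∈ U :=
                (hconj _ _ m.2 hn'N).mpr hn'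
              have e : (rep q * (m : G))⁻¹ * n * (rep q * (m : G))
                  = ((m : G))⁻¹ * ((rep q)⁻¹ * n * rep q) * (m : G) := by group
              rwa [e]
            · show (QuotientGroup.mk (rep q * (m : G)) : G ⧸ N) = q
              rw [QuotientGroup.mk_mul, (QuotientGroup.eq_one_iff _).mpr m.2, mul_one, hrep]⟩ :
            {x : G ⧸ U // n • x = x ∧ π x = q}))
          (by
            intro a b hab
            have hab' : (a : G)⁻¹ * (b : G) ∈ U := by
              have := QuotientGroup.leftRel_apply.mp hab
              simpa [Subgroup.mem_subgroupOf] using this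
            apply Subtype.ext
            show (QuotientGroup.mk (rep q * (a : G)) : G ⧸ U) = QuotientGroup.mk (rep q * (b : G))
            rw [QuotientGroup.eq]
            have e : (rep q * (a : G))⁻¹ * (rep q * (b : G)) = (a : G)⁻¹ * (b : G) := by group
            rwa [e])
      have hbij : Function.Bijective f := by
        constructor
        · intro a b hab
          induction a using Quotient.inductionOn'
          induction b using Quotient.inductionOn'
          rename_i a b
          have : (QuotientGroup.mk (rep q * (a : G)) : G ⧸ U)
              = QuotientGroup.mk (rep q * (b : G)) := congrArg Subtype.val hab
          rw [QuotientGroup.eq] at this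
          have e : (rep q * (a : G))⁻¹ * (rep q * (b : G)) = (a : G)⁻¹ * (b : G) := by group
          rw [e] at this
          apply Quotient.sound'
          rw [QuotientGroup.leftRel_apply]
          simpa [Subgroup.mem_subgroupOf] using this
        · rintro ⟨x, hx1, hx2⟩
          obtain ⟨g, rfl⟩ := QuotientGroup.mk_surjective x
          have hgq : (QuotientGroup.mk g : G ⧸ N) = q := hx2
          have hm : (rep q)⁻¹ * g ∈ N := by
            have : (QuotientGroup.mk (rep q) : G ⧸ N) = QuotientGroup.mk g := by
              rw [hrep, hgq]
            exact QuotientGroup.eq.mp this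
          refine ⟨Quotient.mk'' ⟨(rep q)⁻¹ * g, hm⟩, ?_⟩
          apply Subtype.ext
          show (QuotientGroup.mk (rep q * ((rep q)⁻¹ * g)) : G ⧸ U) = QuotientGroup.mk g
          congr 1
          group
      have hcard : Nat.card {x : G ⧸ U // n • x = x ∧ π x = q} = 2 := by
        rw [← Nat.card_eq_of_bijective f hbij]
        exact hidx
      rw [hcard, h1]
      norm_num
    · -- fiber is empty
      have hempty : IsEmpty {x : G ⧸ U // n • x = x ∧ π x = q} := by
        constructor
        rintro ⟨x, hx1, hx2⟩
        obtain ⟨g, rfl⟩ := QuotientGroup.mk_surjective x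
        have hgq : (QuotientGroup.mk g : G ⧸ N) = q := hx2
        have hm : (rep q)⁻¹ * g ∈ N := by
          have : (QuotientGroup.mk (rep q) : G ⧸ N) = QuotientGroup.mk g := by
            rw [hrep, hgq]
          exact QuotientGroup.eq.mp this
        have hgU : g⁻¹ * n * g ∈ U := (hfix g).mp hx1
        have hn'N : (rep q)⁻¹ * n * rep q ∈ N := by
          have := Subgroup.Normal.conj_mem ‹N.Normal› n hn (rep q)⁻¹
          simpa [mul_assoc] using this
        have e : g⁻¹ * n * g
            = ((rep q)⁻¹ * g)⁻¹ * ((rep q)⁻¹ * n * rep q) * ((rep q)⁻¹ * g) := by group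
        rw [e] at hgU
        have hn' : (rep q)⁻¹ * n * rep q ∈ U := (hconj _ _ hm hn'N).mp hgU
        have : (χ q) ⟨n, hn⟩ = 1 := (hker q).mpr hn'
        rw [this] at h1
        exact absurd h1 (by decide)
      have hcard : Nat.card {x : G ⧸ U // n • x = x ∧ π x = q} = 0 := by
        exact @Nat.card_of_isEmpty _ hempty
      rw [hcard, h1]
      norm_num
  -- assemble
  have e : {x : G ⧸ U // n • x = x}
      ≃ Σ q : G ⧸ N, {x : G ⧸ U // n • x = x ∧ π x = q} :=
    (Equiv.sigmaFiberEquiv (fun y : {x : G ⧸ U // n • x = x} => π y.1)).symm.trans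
      (Equiv.sigmaCongrRight fun q => Equiv.subtypeSubtypeEquivSubtypeInter (fun x : G ⧸ U => n • x = x) (fun x => π x = q))
  have hsum : (Nat.card {x : G ⧸ U // n • x = x} : ℤ)
      = ∑ q : G ⧸ N, (Nat.card {x : G ⧸ U // n • x = x ∧ π x = q} : ℤ) := by
    haveI : ∀ q : G ⧸ N, Fintype {x : G ⧸ U // n • x = x ∧ π x = q} :=
      fun q => Fintype.ofFinite _
    have h1 : Nat.card {x : G ⧸ U // n • x = x}
        = ∑ q : G ⧸ N, Nat.card {x : G ⧸ U // n • x = x ∧ π x = q} := by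
      rw [Nat.card_congr e, Nat.card_eq_fintype_card, Fintype.card_sigma]
      exact Finset.sum_congr rfl fun q _ => (Nat.card_eq_fintype_card).symm
    rw [h1]
    push_cast
    rfl
  rw [hsum]
  have : ∀ q : G ⧸ N, (Nat.card {x : G ⧸ U // n • x = x ∧ π x = q} : ℤ)
      = 1 + ((χ q ⟨n, hn⟩ : ℤˣ) : ℤ) := key
  rw [Finset.sum_congr rfl fun q _ => this q, Finset.sum_add_distrib, Finset.sum_const]
  have hN : (N.index : ℤ) = (((Finset.univ : Finset (G ⧸ N)).card : ℕ) : ℤ) := by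
    simp [Subgroup.index_eq_card, Nat.card_eq_fintype_card, Finset.card_univ]
  rw [hN, nsmul_eq_mul, mul_one]
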